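/- arXiv:1908.07378 — 2 statements merged into one kernel-verified Lean document; each statement's English description precedes it below -/
import Mathlib

section
/- Let n ≥ 1, λ, v ∈ ℝ with λ > v > 0. Then the function θ(s) = 2·arctan( √((λ+v)/(λ−v)) · tan( (n/2)·√(λ²−v²)·s ) ), defined on the interval |s| < π/(n√(λ²−v²)), satisfies the ODE θ'(s) = n·(v·cos θ(s) + λ) with θ(0) = 0. -/
theorem stmt_0 (n : ℕ) (hn : 1 ≤ n) (lam v : ℝ) (hv : 0 < v) (hlv : v < lam)
    (θ : ℝ → ℝ)
    (hθ : ∀ s, θ s =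
      2 * Real.arctan (Real.sqrt ((lam + v) / (lam - v)) *
        Real.tan ((n / 2) * Real.sqrt (lam ^ 2 - v ^ 2) * s))) :
    θ 0 = 0 ∧
    ∀ s : ℝ, |s| < Real.pi / (n * Real.sqrt (lam ^ 2 - v ^ 2)) →
      HasDerivAt θ (n * (v * Real.cos (θ s) + lam)) s := by
  have hθf : θ = fun s => 2 * Real.arctan (Real.sqrt ((lam + v) / (lam - v)) *
      Real.tan ((n / 2) * Real.sqrt (lam ^ 2 - v ^ 2) * s)) := funext hθ
  subst hθf
  set c := Real.sqrt (lam ^ 2 - v ^ 2) with hc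
  set k := Real.sqrt ((lam + v) / (lam - v)) with hk
  have hsub : (0:ℝ) < lam ^ 2 - v ^ 2 := by nlinarith
  have hlv0 : (0:ℝ) < lam - v := by linarith
  have hdiv : (0:ℝ) < (lam + v) / (lam - v) := div_pos (by linarith) hlv0
  have hcpos : 0 < c := Real.sqrt_pos.2 hsub
  have hkpos : 0 < k := Real.sqrt_pos.2 hdiv
  have hk2 : k ^ 2 * (lam - v) = lam + v := by
    rw [hk, Real.sq_sqrt hdiv.le, div_mul_cancel₀ _ hlv0.ne']
  have hck : c * k = lam + v := by
    have h1 : (c * k) ^ 2 = (lam + v) ^ 2 := by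
      rw [mul_pow, hc, hk, Real.sq_sqrt hsub.le, Real.sq_sqrt hdiv.le,
        ← mul_div_assoc, div_eq_iff hlv0.ne']
      ring
    have h2 : (c * k - (lam + v)) * (c * k + (lam + v)) = 0 := by linear_combination h1
    rcases mul_eq_zero.1 h2 with h | h
    · linarith
    · nlinarith [mul_pos hcpos hkpos]
  have hn1 : (1:ℝ) ≤ (n:ℝ) := by exact_mod_cast hn
  have hnc : 0 < (n:ℝ) * c := by positivity
  constructor
  · simp
  · intro s hs
    set u := ((n:ℝ) / 2) * c * s with hu
    rw [lt_div_iff₀ hnc] at hs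
    have hubound : |u| < Real.pi / 2 := by
      rw [hu, abs_mul, abs_of_nonneg (by positivity : (0:ℝ) ≤ (n:ℝ)/2 * c)]
      calc (n:ℝ)/2 * c * |s| = (|s| * ((n:ℝ) * c)) / 2 := by ring
        _ < Real.pi / 2 := by linarith
    have hab := abs_lt.1 hubound
    have hcosu : Real.cos u ≠ 0 :=
      (Real.cos_pos_of_mem_Ioo ⟨by linarith [hab.1], by linarith [hab.2]⟩).ne'
    set t := Real.tan u with ht
    set x := k * t with hx
    have h1 : HasDerivAt (fun s : ℝ => ((n:ℝ) / 2) * c * s) (((n:ℝ)/2) * c) s := by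
      simpa using (hasDerivAt_id s).const_mul (((n:ℝ)/2) * c)
    have h2 : HasDerivAt (fun s : ℝ => Real.tan (((n:ℝ)/2) * c * s))
        (1 / Real.cos u ^ 2 * (((n:ℝ)/2) * c)) s :=
      (Real.hasDerivAt_tan hcosu).comp s h1
    have h3 : HasDerivAt (fun s : ℝ => k * Real.tan (((n:ℝ)/2) * c * s))
        (k * (1 / Real.cos u ^ 2 * (((n:ℝ)/2) * c))) s := h2.const_mul k
    have h4 : HasDerivAt (fun s : ℝ => Real.arctan (k * Real.tan (((n:ℝ)/2) * c * s)))
        (1 / (1 + x ^ 2) * (k * (1 / Real.cos u ^ 2 * (((n:ℝ)/2) * c)))) s :=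
      by
        have h4' := (Real.hasDerivAt_arctan (k * Real.tan (((n:ℝ)/2) * c * s))).comp s h3
        exact h4'
    have h5 := h4.const_mul 2
    have htan2 : 1 / Real.cos u ^ 2 = 1 + t ^ 2 := by
      rw [ht, Real.tan_eq_sin_div_cos, div_pow]
      field_simp
      exact (Real.cos_sq_add_sin_sq u).symm
    have hcosθ : Real.cos (2 * Real.arctan x) = (1 - x ^ 2) / (1 + x ^ 2) := by
      rw [Real.cos_two_mul, Real.cos_arctan, div_pow, one_pow,
        Real.sq_sqrt (by positivity : (0:ℝ) ≤ 1 + x ^ 2)]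
      have hpos : (0:ℝ) < 1 + x ^ 2 := by positivity
      field_simp
      ring
    refine h5.congr_deriv ?_
    symm
    rw [hcosθ, htan2, hx]
    have hpos : (0:ℝ) < 1 + (k*t) ^ 2 := by positivity
    field_simp
    linear_combination t^2 * hk2 - (1+t^2) * hck
end

section
/- Let n ≥ 1 and v > λ > 0. The function θ(s) = 2·arctan( √((v+λ)/(v−λ)) · tanh( (n/2)·√(v²−λ²)·s ) ) satisfies θ'(s) = n·(v·cos θ(s) + λ) for all s ∈ ℝ, with θ(0) = 0. -/
open Real

lemma hasDerivAt_tanh' (x : ℝ) : HasDerivAt Real.tanh (1 - Real.tanh x ^ 2) x := by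
  have hc : Real.cosh x ≠ 0 := (Real.cosh_pos x).ne'
  have h := (Real.hasDerivAt_sinh x).div (Real.hasDerivAt_cosh x) hc
  have heq : ∀ y : ℝ, Real.sinh y / Real.cosh y = Real.tanh y := fun y =>
    (Real.tanh_eq_sinh_div_cosh y).symm
  rw [show Real.sinh / Real.cosh = Real.tanh from funext heq] at h
  refine h.congr_deriv ?_
  have h1 : Real.cosh x ^ 2 - Real.sinh x ^ 2 = 1 := Real.cosh_sq_sub_sinh_sq x
  rw [Real.tanh_eq_sinh_div_cosh, div_pow, one_sub_div (pow_ne_zero 2 hc)]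
  ring

lemma cos_two_arctan (x : ℝ) :
    Real.cos (2 * Real.arctan x) = (1 - x ^ 2) / (1 + x ^ 2) := by
  have hpos : (0:ℝ) < 1 + x ^ 2 := by positivity
  have h2 : Real.cos (2 * Real.arctan x) = 2 * Real.cos (Real.arctan x) ^ 2 - 1 := by
    rw [Real.cos_two_mul]
  rw [h2, Real.cos_arctan]
  rw [div_pow, one_pow, Real.sq_sqrt hpos.le]
  field_simp
  ring

theorem stmt_2 (n : ℕ) (hn : 1 ≤ n) (lam v : ℝ) (hlam : 0 < lam) (hlv : lam < v)
    (θ : ℝ → ℝ)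
    (hθ : ∀ s, θ s =
      2 * Real.arctan (Real.sqrt ((v + lam) / (v - lam)) *
        Real.tanh ((n / 2) * Real.sqrt (v ^ 2 - lam ^ 2) * s))) :
    (∀ s : ℝ, HasDerivAt θ (n * (v * Real.cos (θ s) + lam)) s) ∧ θ 0 = 0 := by
  set a : ℝ := Real.sqrt ((v + lam) / (v - lam)) with ha
  set b : ℝ := (n / 2) * Real.sqrt (v ^ 2 - lam ^ 2) with hb
  have hvl : 0 < v - lam := by linarith
  have hvp : 0 < v + lam := by linarith
  have ha2 : a ^ 2 = (v + lam) / (v - lam) :=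
    Real.sq_sqrt (div_nonneg hvp.le hvl.le)
  have hasq : a * Real.sqrt (v ^ 2 - lam ^ 2) = v + lam := by
    rw [ha, ← Real.sqrt_mul (div_nonneg hvp.le hvl.le)]
    have : (v + lam) / (v - lam) * (v ^ 2 - lam ^ 2) = (v + lam) ^ 2 := by
      field_simp; ring
    rw [this, Real.sqrt_sq hvp.le]
  constructor
  · intro s
    set t : ℝ := Real.tanh (b * s) with ht
    have ht1 : t ^ 2 < 1 := by
      rw [ht, Real.tanh_eq_sinh_div_cosh, div_pow]
      have hc := Real.cosh_pos (b * s)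
      have h1 := Real.cosh_sq_sub_sinh_sq (b * s)
      rw [div_lt_one (by positivity)]
      nlinarith
    have hden : (0:ℝ) < 1 + (a * t) ^ 2 := by positivity
    -- derivative of inner function
    have hlin : HasDerivAt (fun s : ℝ => b * s) b s := by
      simpa using (hasDerivAt_id s).const_mul b
    have htanh : HasDerivAt (fun s : ℝ => Real.tanh (b * s)) ((1 - t ^ 2) * b) s :=
      (hasDerivAt_tanh' (b * s)).comp s hlin
    have hinner : HasDerivAt (fun s : ℝ => a * Real.tanh (b * s)) (a * ((1 - t ^ 2) * b)) s :=
      htanh.const_mul a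
    have harctan : HasDerivAt (fun s : ℝ =>
        2 * Real.arctan (a * Real.tanh (b * s)))
        (2 * (1 / (1 + (a * t) ^ 2) * (a * ((1 - t ^ 2) * b)))) s := by
      exact ((Real.hasDerivAt_arctan (a * t)).comp s hinner).const_mul 2
    have hfun : θ = fun s : ℝ => 2 * Real.arctan (a * Real.tanh (b * s)) := by
      funext s'; exact hθ s'
    have key : HasDerivAt θ (2 * (1 / (1 + (a * t) ^ 2) * (a * ((1 - t ^ 2) * b)))) s :=
      hfun ▸ harctan
    convert key using 1
    -- compute cos θ s
    have hcos : Real.cos (θ s) = (1 - (a * t) ^ 2) / (1 + (a * t) ^ 2) := by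
      rw [hθ s, cos_two_arctan]
    rw [hcos]
    have hab : 2 * a * b = n * (v + lam) := by
      rw [hb, show (2:ℝ) * a * ((n:ℝ)/2 * Real.sqrt (v^2-lam^2))
        = n * (a * Real.sqrt (v^2-lam^2)) from by ring, hasq]
    have ha2' : a ^ 2 * (v - lam) = v + lam := by
      rw [ha2]; field_simp
    field_simp
    linear_combination (-(1 - t^2)) * hab + (-(n:ℝ) * t^2) * ha2'
  · rw [hθ 0]; simp
end
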